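/- Let S be a finite set and for each v ∈ S let ε_v > 0 and let α_v ∈ (0, ∞] be given. Suppose that for every weighting function ξ : S → [0,1] with ∑ξ_v = 1, there exists v ∈ S with ξ_v ≠ 0 such that α_v ≥ ε_v/(2ξ_v). Then ∑_{v∈S} ε_v/α_v ≤ 2 (with ε_v/∞ interpreted as 0). Conversely, if ∑_{v∈S} ε_v/α_v ≤ 2 then for every weighting function ξ there exists v ∈ S with ξ_v ≠ 0 and α_v ≥ ε_v/(2ξ_v). -/

import Mathlib

/-- The equivalence (A) ⟺ (B) of Proposition 7.3 in the case `R_v = 2/ε_v`: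
"for every weighting function `ξ` there is a `v` with `ξ_v ≠ 0` and
`α_v ≥ ε_v/(2ξ_v)`" if and only if `∑_v ε_v/α_v ≤ 2` (with `ε_v/∞ = 0`).
Here `α_v ∈ (0,∞]` is modelled in `ℝ≥0∞`. -/
theorem stmt_17 (S : Type*) [Fintype S] (ε : S → ℝ) (hε : ∀ v, 0 < ε v)
    (α : S → ENNReal) (hα : ∀ v, 0 < α v) :
    (∀ ξ : S → ℝ, (∀ v, 0 ≤ ξ v) → (∀ v, ξ v ≤ 1) → ∑ v, ξ v = 1 →
        ∃ v, ξ v ≠ 0 ∧ ENNReal.ofReal (ε v / (2 * ξ v)) ≤ α v) ↔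
      ∑ v, ENNReal.ofReal (ε v) / α v ≤ 2 := by
  have hfin : ∀ v, ENNReal.ofReal (ε v) / α v ≠ ⊤ := fun v =>
    (ENNReal.div_lt_top ENNReal.ofReal_ne_top (hα v).ne').ne
  constructor
  · intro h
    by_cases htopall : ∀ v, α v = ⊤
    · simp [htopall]
    · push_neg at htopall
      obtain ⟨v0, hv0⟩ := htopall
      set t : S → ℝ := fun v => (ENNReal.ofReal (ε v) / α v).toReal with ht
      have htnn : ∀ v, 0 ≤ t v := fun v => ENNReal.toReal_nonneg
      have htv0 : 0 < t v0 := by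
        apply ENNReal.toReal_pos _ (hfin v0)
        simp [ENNReal.div_eq_zero_iff, hv0, ENNReal.ofReal_eq_zero, not_le, hε v0]
      set T : ℝ := ∑ v, t v with hT
      have hTpos : 0 < T := Finset.sum_pos' (fun v _ => htnn v) ⟨v0, Finset.mem_univ _, htv0⟩
      obtain ⟨v, hξne, hle⟩ := h (fun v => t v / T) (fun v => div_nonneg (htnn v) hTpos.le)
        (fun v => div_le_one_of_le₀
          (Finset.single_le_sum (fun w _ => htnn w) (Finset.mem_univ v)) hTpos.le)
        (by rw [← Finset.sum_div, ← hT]; field_simp)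
      have htvne : t v ≠ 0 := by
        intro h0
        apply hξne
        simp [h0]
      have hαfin : α v ≠ ⊤ := by
        intro hh
        apply htvne
        simp [ht, hh]
      have hαpos : 0 < (α v).toReal := ENNReal.toReal_pos (hα v).ne' hαfin
      have htv : t v = ε v / (α v).toReal := by
        simp [ht, ENNReal.toReal_div, ENNReal.toReal_ofReal (hε v).le]
      have htvpos : 0 < t v := lt_of_le_of_ne (htnn v) (Ne.symm htvne)
      have hkey : ε v / (2 * (t v / T)) = (α v).toReal * T / 2 := by
        rw [htv]
        field_simp [(hε v).ne']
      rw [hkey] at hle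
      have h1 : (α v).toReal * T / 2 ≤ (α v).toReal :=
        (ENNReal.ofReal_le_iff_le_toReal hαfin).mp hle
      have hT2 : T ≤ 2 := by nlinarith
      have hsum : ∑ v, ENNReal.ofReal (ε v) / α v = ENNReal.ofReal T := by
        rw [hT, ENNReal.ofReal_sum_of_nonneg (fun w _ => htnn w)]
        exact Finset.sum_congr rfl fun w _ => (ENNReal.ofReal_toReal (hfin w)).symm
      rw [hsum]
      calc ENNReal.ofReal T ≤ ENNReal.ofReal 2 := ENNReal.ofReal_le_ofReal hT2
        _ = 2 := by norm_num
  · intro hsum ξ hξnn hξ1 hξs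
    by_contra hcon
    push_neg at hcon
    obtain ⟨v0, hv0⟩ : ∃ v, ξ v ≠ 0 := by
      by_contra hall
      push_neg at hall
      simp [hall] at hξs
    set r : S → ℝ := fun v => (ENNReal.ofReal (ε v) / α v).toReal with hr
    have hrlt : ∀ v, ξ v ≠ 0 → 2 * ξ v < r v := by
      intro v hv
      have hξpos : 0 < ξ v := lt_of_le_of_ne (hξnn v) (Ne.symm hv)
      have hlt := hcon v hv
      have hαfin : α v ≠ ⊤ := hlt.trans_le le_top |>.ne
      have hαfin' : α v ≠ ⊤ := ne_top_of_lt (hlt.trans_le (le_refl _) |>.trans_le le_top)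
      have hαfin2 : α v ≠ ⊤ := ne_top_of_lt (lt_of_lt_of_le hlt (le_top))
      have hapos : 0 < (α v).toReal := ENNReal.toReal_pos (hα v).ne' hαfin2
      have ha : (α v).toReal < ε v / (2 * ξ v) :=
        (ENNReal.lt_ofReal_iff_toReal_lt hαfin2).mp hlt
      have hrv : r v = ε v / (α v).toReal := by
        simp [hr, ENNReal.toReal_div, ENNReal.toReal_ofReal (hε v).le]
      have h2ξ : (0:ℝ) < 2 * ξ v := by positivity
      have h2 : (α v).toReal * (2 * ξ v) < ε v := (lt_div_iff₀ h2ξ).mp ha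
      rw [hrv, lt_div_iff₀ hapos]
      linarith
    have hrle : ∀ v, 2 * ξ v ≤ r v := by
      intro v
      by_cases hv : ξ v = 0
      · simp only [hv, mul_zero]
        positivity
      · exact (hrlt v hv).le
    have hsle : ∑ v, r v ≤ 2 := by
      have h1 : ∑ v, r v = (∑ v, ENNReal.ofReal (ε v) / α v).toReal :=
        (ENNReal.toReal_sum fun v _ => hfin v).symm
      rw [h1]
      calc (∑ v, ENNReal.ofReal (ε v) / α v).toReal ≤ (2 : ENNReal).toReal :=
            ENNReal.toReal_mono (by norm_num) hsum
        _ = 2 := by norm_num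
    have hlt2 : (2:ℝ) < ∑ v, r v := by
      have := Finset.sum_lt_sum (fun v _ => hrle v)
        ⟨v0, Finset.mem_univ _, hrlt v0 hv0⟩
      calc (2:ℝ) = ∑ v, 2 * ξ v := by rw [← Finset.mul_sum, hξs, mul_one]
        _ < ∑ v, r v := this
    linarith
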